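/- arXiv:2411.03839 — 3 statements merged into one kernel-verified Lean document; each statement's English description precedes it below -/
import Mathlib

section
/- Let 0 < p01 < p11 < 1, p00 = 1−p01, p10 = 1−p11. The unique C ∈ (p01, p11) satisfying D(C‖p01) = D(C‖p11) is given explicitly by C = ln(p00/p10) / ln((p11·p00)/(p01·p10)). -/
/-- Binary Kullback–Leibler divergence `D(p‖q)`. -/
noncomputable def klBer (p q : ℝ) : ℝ :=
  p * Real.log (p / q) + (1 - p) * Real.log ((1 - p) / (1 - q))

theorem stmt2 (p01 p11 : ℝ) (h0 : 0 < p01) (h1 : p01 < p11) (h2 : p11 < 1) :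
    Real.log ((1 - p01) / (1 - p11)) /
        Real.log ((p11 * (1 - p01)) / (p01 * (1 - p11))) ∈ Set.Ioo p01 p11 ∧
    klBer (Real.log ((1 - p01) / (1 - p11)) /
        Real.log ((p11 * (1 - p01)) / (p01 * (1 - p11)))) p01 =
      klBer (Real.log ((1 - p01) / (1 - p11)) /
        Real.log ((p11 * (1 - p01)) / (p01 * (1 - p11)))) p11 ∧
    ∀ c ∈ Set.Ioo p01 p11, klBer c p01 = klBer c p11 →
      c = Real.log ((1 - p01) / (1 - p11)) /
        Real.log ((p11 * (1 - p01)) / (p01 * (1 - p11))) := by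
  have h00 : (0:ℝ) < 1 - p01 := by linarith
  have h10 : (0:ℝ) < 1 - p11 := by linarith
  have hp11 : 0 < p11 := lt_trans h0 h1
  set A := Real.log p11 - Real.log p01 with hA
  set B := Real.log (1 - p01) - Real.log (1 - p11) with hB
  have hApos : 0 < A := sub_pos.mpr (Real.log_lt_log h0 h1)
  have hBpos : 0 < B := sub_pos.mpr (Real.log_lt_log h10 (by linarith))
  have hN : Real.log ((1 - p01) / (1 - p11)) = B := Real.log_div h00.ne' h10.ne'
  have hD : Real.log ((p11 * (1 - p01)) / (p01 * (1 - p11))) = A + B := by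
    rw [Real.log_div (by positivity) (by positivity),
        Real.log_mul hp11.ne' h00.ne', Real.log_mul h0.ne' h10.ne']
    ring
  have hABpos : 0 < A + B := by linarith
  -- four basic inequalities from log x < x - 1
  have ineq1 : p01 * A < p11 - p01 := by
    have h := Real.log_lt_sub_one_of_pos (show (0:ℝ) < p11 / p01 by positivity)
      (by intro h; rw [div_eq_one_iff_eq h0.ne'] at h; linarith)
    rw [Real.log_div hp11.ne' h0.ne'] at h
    have := mul_lt_mul_of_pos_left h h0
    calc p01 * A < p01 * (p11 / p01 - 1) := this
      _ = p11 - p01 := by field_simp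
  have ineq2 : p11 - p01 < (1 - p01) * B := by
    have h := Real.log_lt_sub_one_of_pos (show (0:ℝ) < (1 - p11) / (1 - p01) by positivity)
      (by intro h; rw [div_eq_one_iff_eq h00.ne'] at h; linarith)
    rw [Real.log_div h10.ne' h00.ne'] at h
    have := mul_lt_mul_of_pos_left h h00
    have heq : (1 - p01) * ((1 - p11) / (1 - p01) - 1) = p01 - p11 := by field_simp; ring
    nlinarith [this]
  have ineq3 : (1 - p11) * B < p11 - p01 := by
    have h := Real.log_lt_sub_one_of_pos (show (0:ℝ) < (1 - p01) / (1 - p11) by positivity)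
      (by intro h; rw [div_eq_one_iff_eq h10.ne'] at h; linarith)
    rw [Real.log_div h00.ne' h10.ne'] at h
    have := mul_lt_mul_of_pos_left h h10
    calc (1 - p11) * B < (1 - p11) * ((1 - p01) / (1 - p11) - 1) := this
      _ = p11 - p01 := by field_simp; ring
  have ineq4 : p11 - p01 < p11 * A := by
    have h := Real.log_lt_sub_one_of_pos (show (0:ℝ) < p01 / p11 by positivity)
      (by intro h; rw [div_eq_one_iff_eq hp11.ne'] at h; linarith)
    rw [Real.log_div h0.ne' hp11.ne'] at h
    have := mul_lt_mul_of_pos_left h hp11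
    have heq : p11 * (p01 / p11 - 1) = p01 - p11 := by field_simp
    nlinarith [this]
  have hmem : B / (A + B) ∈ Set.Ioo p01 p11 := by
    constructor
    · rw [lt_div_iff₀ hABpos]; nlinarith
    · rw [div_lt_iff₀ hABpos]; nlinarith
  have key : ∀ c : ℝ, 0 < c → c < 1 →
      klBer c p01 - klBer c p11 = c * (A + B) - B := by
    intro c hc hc1
    have hc1' : (0:ℝ) < 1 - c := by linarith
    unfold klBer
    rw [Real.log_div hc.ne' h0.ne', Real.log_div hc.ne' hp11.ne',
        Real.log_div hc1'.ne' h00.ne', Real.log_div hc1'.ne' h10.ne']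
    ring
  rw [hN, hD]
  refine ⟨hmem, ?_, ?_⟩
  · have hc1 : B / (A + B) < 1 := lt_trans hmem.2 h2
    have := key (B / (A + B)) (lt_trans h0 hmem.1) hc1
    rw [div_mul_cancel₀ B hABpos.ne'] at this
    linarith [this]
  · intro c hc hkl
    have hc0 : 0 < c := lt_trans h0 hc.1
    have hc1 : c < 1 := lt_trans hc.2 h2
    have := key c hc0 hc1
    rw [hkl, sub_self] at this
    field_simp
    linarith [this]
end

section
/- Let α ∈ (0,1), β > 0, and define ξ(α, β, Γ) = (−ln(1 − (1−α)^{Γ−1}·(1 − e^{−β})))^{−1} for positive integers Γ. Then for all Γ ≤ ⌈1/α⌉, we have β^{−1} ≤ ξ(α, β, Γ) ≤ e / ((1−α)(1 − e^{−β})). -/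
theorem stmt5 (α β : ℝ) (hα : α ∈ Set.Ioo (0:ℝ) 1) (hβ : 0 < β)
    (Γ : ℕ) (hΓ : 1 ≤ Γ) (hΓle : Γ ≤ ⌈1 / α⌉₊) :
    β⁻¹ ≤ (-(Real.log (1 - (1 - α) ^ (Γ - 1) * (1 - Real.exp (-β)))))⁻¹ ∧
    (-(Real.log (1 - (1 - α) ^ (Γ - 1) * (1 - Real.exp (-β)))))⁻¹
      ≤ Real.exp 1 / ((1 - α) * (1 - Real.exp (-β))) := by
  obtain ⟨hα0, hα1⟩ := hα
  set n := Γ - 1 with hn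
  have ha0 : (0:ℝ) < 1 - α := by linarith
  have ha1 : (1:ℝ) - α < 1 := by linarith
  have hpn : (0:ℝ) < (1 - α) ^ n := pow_pos ha0 n
  have hpn1 : (1 - α) ^ n ≤ 1 := pow_le_one₀ (le_of_lt ha0) (le_of_lt ha1)
  have he0 : Real.exp (-β) < 1 := by
    rw [Real.exp_lt_one_iff]; linarith
  have he1 : 0 < Real.exp (-β) := Real.exp_pos _
  set x := (1 - α) ^ n * (1 - Real.exp (-β)) with hx
  have hx0 : 0 < x := mul_pos hpn (by linarith)
  have hxle : x ≤ 1 - Real.exp (-β) := by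
    have := mul_le_of_le_one_left (by linarith : (0:ℝ) ≤ 1 - Real.exp (-β)) hpn1
    linarith [this]
  have hx1 : x < 1 := by linarith
  have h1x0 : 0 < 1 - x := by linarith
  have hlog_neg : Real.log (1 - x) < 0 := Real.log_neg h1x0 (by linarith)
  have hL0 : 0 < -Real.log (1 - x) := by linarith
  constructor
  · -- lower bound: -log(1-x) ≤ β
    have h1 : Real.exp (-β) ≤ 1 - x := by linarith
    have h2 : -β ≤ Real.log (1 - x) := by
      have := Real.log_le_log he1 h1
      rwa [Real.log_exp] at this
    exact inv_anti₀ hL0 (by linarith)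
  · -- upper bound
    have hxL : x ≤ -Real.log (1 - x) := by
      have := Real.log_le_sub_one_of_pos h1x0
      linarith
    have h1 : (-Real.log (1 - x))⁻¹ ≤ x⁻¹ := inv_anti₀ hx0 hxL
    have hkey : 1 - α ≤ Real.exp 1 * (1 - α) ^ n := by
      have hl0 : Real.log (1 - α) ≤ 0 := Real.log_nonpos (by linarith) (by linarith)
      have hl2 : -Real.log (1 - α) ≤ α / (1 - α) := by
        have h := Real.log_le_sub_one_of_pos (show (0:ℝ) < (1 - α)⁻¹ from inv_pos.2 ha0)
        rw [Real.log_inv] at h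
        have : (1 - α)⁻¹ - 1 = α / (1 - α) := by field_simp; ring
        linarith [this ▸ h]
      have hn_lt : (n:ℝ) < 1 / α := by
        have h1 : (Γ:ℝ) ≤ (⌈1 / α⌉₊ : ℝ) := Nat.cast_le.2 hΓle
        have h2 : (⌈1 / α⌉₊ : ℝ) < 1 / α + 1 :=
          Nat.ceil_lt_add_one (by positivity)
        have h3 : ((n:ℝ)) = (Γ:ℝ) - 1 := by
          rw [hn, Nat.cast_sub hΓ]; simp
        linarith
      have h3 : ((n:ℝ) - 1) * (-Real.log (1 - α)) ≤ 1 := by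
        rcases Nat.eq_zero_or_pos n with h0 | h1
        · simp [h0]; linarith
        · have hnn : (1:ℝ) ≤ (n:ℝ) := by exact_mod_cast h1
          have hub : (n:ℝ) - 1 ≤ (1 - α) / α := by
            have : 1 / α - 1 = (1 - α) / α := by field_simp
            linarith
          calc ((n:ℝ) - 1) * (-Real.log (1 - α))
              ≤ ((1 - α) / α) * (α / (1 - α)) := by
                apply mul_le_mul hub hl2 (by linarith) (by positivity)
            _ = 1 := by field_simp
      have h4 : Real.log (1 - α) ≤ 1 + (n:ℝ) * Real.log (1 - α) := by nlinarith
      calc 1 - α = Real.exp (Real.log (1 - α)) := (Real.exp_log ha0).symm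
        _ ≤ Real.exp (1 + (n:ℝ) * Real.log (1 - α)) := Real.exp_le_exp.2 h4
        _ = Real.exp 1 * (1 - α) ^ n := by
            rw [Real.exp_add, Real.exp_nat_mul, Real.exp_log ha0]
    have h2 : x⁻¹ ≤ Real.exp 1 / ((1 - α) * (1 - Real.exp (-β))) := by
      rw [div_eq_mul_inv, inv_eq_one_div, div_le_iff₀ hx0]
      have hE : 0 < (1 - α) * (1 - Real.exp (-β)) := by
        apply mul_pos ha0; linarith
      rw [mul_assoc, mul_comm ((1 - α) * (1 - Real.exp (-β)))⁻¹ x, ← mul_assoc,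
        ← div_eq_mul_inv, le_div_iff₀ hE]
      have : (1 - α) * (1 - Real.exp (-β)) ≤ Real.exp 1 * x := by
        rw [hx, ← mul_assoc]
        apply mul_le_mul_of_nonneg_right hkey (by linarith)
      linarith
    linarith
end

section
/- Let α ∈ (0,1) and β > 0, and define f(Γ) = −Γ·ln(1 − (1−α)^{Γ−1}·(1 − e^{−β})) for positive integers Γ. Then any maximizer Γ̂ of f over the positive integers satisfies Γ̂ ≤ ⌈1/α⌉. -/
lemma log_aux (u v : ℝ) (hu : 0 < u) (huv : u < v) (hv : v < 1) :
    u * Real.log (1 - v) < v * Real.log (1 - u) := by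
  have hv0 : 0 < v := hu.trans huv
  have h1v : (0:ℝ) < 1 - v := by linarith
  have key := strictConcaveOn_log_Ioi.2 (Set.mem_Ioi.mpr h1v)
    (Set.mem_Ioi.mpr one_pos) (by intro h; rw [sub_eq_self] at h; linarith)
    (div_pos hu hv0) (show (0:ℝ) < 1 - u / v by
      have : u / v < 1 := (div_lt_one hv0).mpr huv
      linarith) (by ring)
  have hcomb : (u / v) • (1 - v) + (1 - u / v) • (1:ℝ) = 1 - u := by
    field_simp
    simp only [smul_eq_mul]; field_simp; ring
  rw [hcomb] at key
  simp only [smul_eq_mul, Real.log_one, mul_one] at key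
  -- key : u / v * Real.log (1 - v) + (1 - u/v) * 0 < Real.log (1 - u)
  have h2 : u / v * Real.log (1 - v) < Real.log (1 - u) := by linarith
  have h3 := mul_lt_mul_of_pos_left h2 hv0
  have hvv : v * (u / v * Real.log (1 - v)) = u * Real.log (1 - v) := by
    field_simp
  rw [hvv] at h3
  linarith

theorem stmt7 (α β : ℝ) (hα : α ∈ Set.Ioo (0:ℝ) 1) (hβ : 0 < β)
    (Γhat : ℕ) (hΓhat : 1 ≤ Γhat)
    (hmax : ∀ Γ : ℕ, 1 ≤ Γ →
      -(Γ : ℝ) * Real.log (1 - (1 - α) ^ (Γ - 1) * (1 - Real.exp (-β)))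
        ≤ -(Γhat : ℝ) * Real.log (1 - (1 - α) ^ (Γhat - 1) * (1 - Real.exp (-β)))) :
    Γhat ≤ ⌈1 / α⌉₊ := by
  obtain ⟨hα0, hα1⟩ := hα
  by_contra hcon
  push_neg at hcon
  set n := Γhat with hn
  have hceil1 : 1 ≤ ⌈1 / α⌉₊ := Nat.one_le_ceil_iff.mpr (by positivity)
  have h2n : 2 ≤ n := by omega
  have hnα : 1 < (n : ℝ) * α := by
    have h1 : (1 / α : ℝ) ≤ (⌈1 / α⌉₊ : ℝ) := Nat.le_ceil _
    have h2 : ((⌈1 / α⌉₊ : ℕ) : ℝ) < (n : ℝ) := by exact_mod_cast hcon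
    have : 1 / α < (n : ℝ) := lt_of_le_of_lt h1 h2
    calc (1:ℝ) = (1/α) * α := by field_simp
    _ < (n:ℝ) * α := by exact mul_lt_mul_of_pos_right this hα0
  set q := 1 - α with hq
  set c := 1 - Real.exp (-β) with hc
  have hq0 : 0 < q := by linarith
  have hq1 : q < 1 := by linarith
  have hc0 : 0 < c := by
    have : Real.exp (-β) < 1 := Real.exp_lt_one_iff.mpr (by linarith)
    linarith
  have hc1 : c < 1 := by
    have := Real.exp_pos (-β)
    linarith
  set u := q ^ (n - 1) * c with hu
  set v := q ^ (n - 2) * c with hv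
  have hu0 : 0 < u := by positivity
  have huv : u < v := by
    have : q ^ (n - 1) < q ^ (n - 2) :=
      pow_lt_pow_right_of_lt_one₀ hq0 hq1 (by omega)
    exact mul_lt_mul_of_pos_right this hc0
  have hv1 : v < 1 := by
    have h1 : q ^ (n - 2) ≤ 1 := pow_le_one₀ hq0.le hq1.le
    nlinarith
  have hvq : v * q = u := by
    have : q ^ (n - 2) * q = q ^ (n - 1) := by
      rw [← pow_succ]
      congr 1
      omega
    rw [hu, hv]; nlinarith [this]
  have hkey := log_aux u v hu0 huv hv1
  have hLv : Real.log (1 - v) < 0 := Real.log_neg (by linarith) (by linarith)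
  have hLu : Real.log (1 - u) < 0 := Real.log_neg (by linarith) (by linarith [huv])
  have hspec := hmax (n - 1) (by omega)
  have hcast : ((n - 1 : ℕ) : ℝ) = (n : ℝ) - 1 := by
    have h1 : (1:ℕ) ≤ n := by omega
    push_cast [h1]
    ring
  have hidx : (n - 1) - 1 = n - 2 := by omega
  rw [hidx, hcast, ← hv] at hspec
  -- hspec : -((n:ℝ)-1) * log (1 - q^(n-2) * c) ≤ -(n:ℝ) * log (1 - q^(n-1)*c)
  have hv0 : 0 < v := hu0.trans huv
  -- from hkey: u * log(1-v) < v * log(1-u), u = v q, so q log(1-v) < log(1-u)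
  have hql : q * Real.log (1 - v) < Real.log (1 - u) := by
    have := hkey
    rw [← hvq] at this
    nlinarith [this, hv0]
  have hnpos : (0:ℝ) < (n:ℝ) := by positivity
  have hp1 : (0:ℝ) < ((n:ℝ) * α - 1) * (-Real.log (1 - v)) :=
    mul_pos (by linarith) (by linarith)
  nlinarith [hspec, hLv, hnα, hnpos, mul_lt_mul_of_pos_left hql hnpos, hp1]
end
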